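/- For a Lipschitz function φ : Y → ℝ on a bounded set Y ⊂ ℝ² whose zero level set is a C¹ curve with |∇φ| bounded below by a positive constant, the number of grid points y_{jk} on a uniform grid with spacing h_Y satisfying |φ(y_{jk})| < K·h_Y is O(1/h_Y) as h_Y → 0. -/

import Mathlib

open Set Filter Metric Topology

set_option maxHeartbeats 1000000 in
lemma exists_zero_near {φ : ℝ × ℝ → ℝ} {s : Set (ℝ × ℝ)}
    (hs : IsCompact s) (hc : ContinuousOn φ s)
    {κ : ℝ} (hκ : 0 < κ)
    (hdiff : ∀ p ∈ s, DifferentiableAt ℝ φ p)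
    (hgrad : ∀ p ∈ s, κ ≤ ‖fderiv ℝ φ p‖)
    {p : ℝ × ℝ} (hp : p ∈ s)
    (hint : Metric.closedBall p (2 * |φ p| / κ) ⊆ interior s) :
    ∃ q ∈ s, φ q = 0 ∧ dist q p ≤ 2 * |φ p| / κ := by
  classical
  set F : ℝ × ℝ → ℝ := fun x => |φ x| + κ / 2 * dist x p with hF
  have Fcont : ContinuousOn F s := by
    apply ContinuousOn.add hc.abs
    exact (continuous_const.mul (continuous_id.dist continuous_const)).continuousOn
  obtain ⟨q, hqs, hq⟩ := hs.exists_isMinOn ⟨p, hp⟩ Fcont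
  have hmin : ∀ x ∈ s, F q ≤ F x := fun x hx => isMinOn_iff.mp hq x hx
  have hFqp : F q ≤ |φ p| := by
    have := hmin p hp
    simpa [hF] using this
  have hqp2 : κ / 2 * dist q p ≤ |φ p| := by
    have h0 : 0 ≤ |φ q| := abs_nonneg _
    simp only [hF] at hFqp; linarith
  have hdqp : dist q p ≤ 2 * |φ p| / κ := by
    rw [le_div_iff₀ hκ]; nlinarith [dist_nonneg (x := q) (y := p)]
  refine ⟨q, hqs, ?_, hdqp⟩
  by_contra hc0
  have hqi : q ∈ interior s := hint (Metric.mem_closedBall.mpr hdqp)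
  set f := fderiv ℝ φ q with hfdef
  have hf : κ ≤ ‖f‖ := hgrad q hqs
  have hnle : ¬ ‖f‖ ≤ 7 / 8 * κ := by nlinarith
  rw [ContinuousLinearMap.opNorm_le_iff (by positivity)] at hnle
  push_neg at hnle
  obtain ⟨x, hx⟩ := hnle
  have hxne : x ≠ 0 := by
    rintro rfl
    simp only [norm_zero, mul_zero, map_zero] at hx
    exact absurd hx (lt_irrefl 0)
  set v : ℝ × ℝ := ‖x‖⁻¹ • x with hvdef
  have hv1 : ‖v‖ = 1 := norm_smul_inv_norm hxne
  have hxpos : (0:ℝ) < ‖x‖ := norm_pos_iff.mpr hxne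
  have hfv : 7 / 8 * κ < |f v| := by
    have h1 : f v = ‖x‖⁻¹ * f x := by rw [hvdef, map_smul, smul_eq_mul]
    have h2 : |f v| = ‖x‖⁻¹ * ‖f x‖ := by
      rw [h1, abs_mul, abs_of_pos (inv_pos.mpr hxpos), Real.norm_eq_abs]
    rw [h2, ← div_eq_inv_mul, lt_div_iff₀ hxpos]
    linarith [hx]
  have hfvne : f v ≠ 0 := by
    intro h; rw [h, abs_zero] at hfv; nlinarith
  have hφq : |φ q| > 0 := abs_pos.mpr hc0
  set u : ℝ × ℝ := if 0 < φ q * f v then v else -v with hudef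
  have hu1 : ‖u‖ = 1 := by
    by_cases hcase : 0 < φ q * f v <;> simp [hudef, hcase, hv1]
  have hfu : 7 / 8 * κ * |φ q| < φ q * f u := by
    have key : φ q * f u = |φ q| * |f v| := by
      by_cases hcase : 0 < φ q * f v
      · simp only [hudef, if_pos hcase]
        rw [← abs_mul]
        exact (abs_of_pos hcase).symm
      · have hne : φ q * f v ≠ 0 := mul_ne_zero hc0 hfvne
        have hneg : φ q * f v < 0 := lt_of_le_of_ne (not_lt.mp hcase) hne
        simp only [hudef, if_neg hcase, map_neg]
        rw [mul_neg, ← abs_of_neg hneg, abs_mul]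
    rw [key, mul_comm (7 / 8 * κ) _]
    exact mul_lt_mul_of_pos_left hfv hφq
  set w : ℝ × ℝ := -u with hwdef
  have hw1 : ‖w‖ = 1 := by rw [hwdef, norm_neg, hu1]
  have hFd : HasFDerivAt φ f q := (hdiff q hqs).hasFDerivAt
  have hpath : HasDerivAt (fun t : ℝ => q + t • w) w 0 := by
    simpa using ((hasDerivAt_id (0:ℝ)).smul_const w).const_add q
  have hcomp : HasDerivAt (fun t : ℝ => φ (q + t • w)) (f w) 0 := by
    have h' : HasFDerivAt φ f (q + (0:ℝ) • w) := by simpa using hFd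
    exact h'.comp_hasDerivAt 0 hpath
  have hlo := (hasDerivAt_iff_isLittleO.mp hcomp).def (show (0:ℝ) < κ / 8 by positivity)
  have E1 : ∀ᶠ t in 𝓝 (0:ℝ),
      ‖φ (q + t • w) - φ (q + (0:ℝ) • w) - (t - 0) • f w‖ ≤ κ / 8 * ‖t - 0‖ := hlo
  have htend : Tendsto (fun t : ℝ => q + t • w) (𝓝 0) (𝓝 q) := by
    have hcont : Continuous fun t : ℝ => q + t • w :=
      continuous_const.add (continuous_id.smul continuous_const)
    simpa using hcont.tendsto 0
  have E2 : ∀ᶠ t in 𝓝 (0:ℝ), q + t • w ∈ s := by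
    have hmem : ∀ᶠ z in 𝓝 q, z ∈ s :=
      (isOpen_interior.eventually_mem hqi).mono fun z hz => interior_subset hz
    exact htend.eventually hmem
  have E4 : ∀ᶠ t in 𝓝 (0:ℝ), t < |φ q| / (‖f‖ + 1) := Iio_mem_nhds (by positivity)
  have E5 : ∀ᶠ t in 𝓝[>] (0:ℝ), (0:ℝ) < t := self_mem_nhdsWithin
  have Eall := (((E1.and E2).and E4).filter_mono nhdsWithin_le_nhds).and E5
  obtain ⟨t, ⟨⟨hE1, hE2⟩, hE4⟩, ht0⟩ := Eall.exists
  have hfw : f w = -(f u) := by rw [hwdef, map_neg]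
  have hfu_le : |f u| ≤ ‖f‖ := by
    have h' := f.le_opNorm u
    rw [hu1, mul_one] at h'
    exact h'
  have hAmin : |φ q| ≤ |φ (q + t • w)| + κ / 2 * t := by
    have h1 := hmin (q + t • w) hE2
    have hdd : dist (q + t • w) p ≤ t + dist q p := by
      calc dist (q + t • w) p ≤ dist (q + t • w) q + dist q p := dist_triangle _ _ _
        _ = ‖t • w‖ + dist q p := by rw [dist_eq_norm, add_sub_cancel_left]
        _ = t + dist q p := by
            rw [norm_smul, hw1, Real.norm_eq_abs, abs_of_pos ht0, mul_one]
    simp only [hF] at h1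
    nlinarith [mul_le_mul_of_nonneg_left hdd (by positivity : (0:ℝ) ≤ κ / 2)]
  have hB : |φ (q + t • w)| ≤ |φ q - t * f u| + κ / 8 * t := by
    rw [Real.norm_eq_abs, Real.norm_eq_abs] at hE1
    simp only [zero_smul, add_zero, sub_zero, hfw, smul_eq_mul, mul_neg] at hE1
    have habs : |φ (q + t • w)| - |φ q - t * f u| ≤ |φ (q + t • w) - (φ q - t * f u)| :=
      abs_sub_abs_le_abs_sub _ _
    have heq : φ (q + t • w) - (φ q - t * f u) = φ (q + t • w) - φ q - -(t * f u) := by ring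
    rw [heq] at habs
    rw [abs_of_pos ht0] at hE1
    linarith
  have hC : |φ q - t * f u| ≤ |φ q| - 7 / 8 * κ * t := by
    have hbound : t * |f u| ≤ |φ q| := by
      have h1 : t * (‖f‖ + 1) ≤ |φ q| := by
        rw [lt_div_iff₀ (by positivity : (0:ℝ) < ‖f‖ + 1)] at hE4
        linarith
      calc t * |f u| ≤ t * (‖f‖ + 1) :=
            mul_le_mul_of_nonneg_left (by linarith) ht0.le
        _ ≤ |φ q| := h1
    rw [abs_le]
    rcases lt_or_gt_of_ne hc0 with hneg | hpos
    · have habs : |φ q| = -φ q := abs_of_neg hneg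
      have hg : 7 / 8 * κ ≤ -(f u) := by nlinarith
      have habs2 : |f u| = -(f u) := by
        rw [abs_of_neg]; nlinarith
      constructor <;> nlinarith
    · have habs : |φ q| = φ q := abs_of_pos hpos
      have hg : 7 / 8 * κ ≤ f u := by nlinarith
      have habs2 : |f u| = f u := by rw [abs_of_pos]; nlinarith
      constructor <;> nlinarith
  nlinarith

set_option maxHeartbeats 1000000 in
theorem grid_points_near_level_set (y₀ ymax : ℝ) (hy : y₀ < ymax)
    (φ : ℝ × ℝ → ℝ) (L : NNReal)
    (hLip : LipschitzOnWith L φ (Set.Icc y₀ ymax ×ˢ Set.Icc y₀ ymax))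
    (hdiff : ∀ p ∈ Set.Icc y₀ ymax ×ˢ Set.Icc y₀ ymax, DifferentiableAt ℝ φ p)
    (κ : ℝ) (hκ : 0 < κ)
    (hgrad : ∀ p ∈ Set.Icc y₀ ymax ×ˢ Set.Icc y₀ ymax, κ ≤ ‖fderiv ℝ φ p‖)
    (γ : ℝ → ℝ × ℝ) (hγ : ContDiff ℝ 1 γ)
    (hcurve : {p ∈ Set.Icc y₀ ymax ×ˢ Set.Icc y₀ ymax | φ p = 0} = γ '' Set.Icc 0 1)
    (K : ℝ) (hK : 0 < K) :
    ∃ C > 0, ∀ M : ℕ, 0 < M →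
      (Set.ncard {jk : Fin (M + 1) × Fin (M + 1) |
          |φ (y₀ + jk.1 * ((ymax - y₀) / M), y₀ + jk.2 * ((ymax - y₀) / M))| <
            K * ((ymax - y₀) / M)} : ℝ) ≤ C / ((ymax - y₀) / M) := by
  classical
  have hY : (0:ℝ) < ymax - y₀ := sub_pos.mpr hy
  -- Lipschitz-type bound for γ on [0,1]
  obtain ⟨Λ₀, hΛ₀⟩ := (isCompact_Icc (a := (0:ℝ)) (b := 1)).exists_bound_of_continuousOn
    (hγ.continuous_deriv le_rfl).continuousOn
  set Λ : ℝ := max Λ₀ 0 with hΛdef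
  have hΛ0 : 0 ≤ Λ := le_max_right _ _
  have hγlip : ∀ t ∈ Icc (0:ℝ) 1, ∀ t' ∈ Icc (0:ℝ) 1, ‖γ t - γ t'‖ ≤ Λ * ‖t - t'‖ := by
    intro t ht t' ht'
    exact (convex_Icc (0:ℝ) 1).norm_image_sub_le_of_norm_deriv_le
      (fun x _ => (hγ.differentiable one_ne_zero) x)
      (fun x hx => le_max_of_le_left (hΛ₀ x hx)) ht' ht
  -- constants
  set B : ℕ := ⌈2 * K / κ⌉₊ + 1 with hBdef
  have hB2K : 2 * K / κ ≤ (B : ℝ) := by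
    rw [hBdef]; push_cast; linarith [Nat.le_ceil (2 * K / κ)]
  set c : ℝ := 4 * K / κ + Λ / (ymax - y₀) with hcdef
  have hc0 : 0 ≤ c := by positivity
  set d : ℕ := ⌈c⌉₊ with hddef
  set Cc : ℕ := 4 * B + (2 * d + 1) ^ 2 with hCcdef
  refine ⟨2 * ((Cc : ℝ) + 1) * (ymax - y₀), by positivity, ?_⟩
  intro M hM
  set h : ℝ := (ymax - y₀) / M with hhdef
  have hMpos : (0:ℝ) < M := Nat.cast_pos.mpr hM
  have hh : 0 < h := div_pos hY hMpos
  have hMh : (M : ℝ) * h = ymax - y₀ := by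
    rw [hhdef]; field_simp
  set sq : Set (ℝ × ℝ) := Icc y₀ ymax ×ˢ Icc y₀ ymax with hsqdef
  set pt : Fin (M + 1) × Fin (M + 1) → ℝ × ℝ :=
    fun a => (y₀ + a.1 * h, y₀ + a.2 * h) with hptdef
  set S : Finset (Fin (M + 1) × Fin (M + 1)) :=
    Finset.univ.filter (fun a => |φ (pt a)| < K * h) with hSdef
  have hset : {jk : Fin (M + 1) × Fin (M + 1) |
      |φ (y₀ + jk.1 * h, y₀ + jk.2 * h)| < K * h} = (↑S : Set _) := by
    ext a
    simp [hSdef, hptdef]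
  rw [hset, Set.ncard_coe_finset]
  -- grid points lie in the square
  have hptmem : ∀ a : Fin (M + 1) × Fin (M + 1), pt a ∈ sq := by
    intro a
    have h1 : ∀ i : Fin (M + 1), y₀ ≤ y₀ + (i : ℝ) * h ∧ y₀ + (i : ℝ) * h ≤ ymax := by
      intro i
      have hi : (i : ℝ) ≤ M := by
        have := i.isLt
        exact_mod_cast Nat.lt_succ_iff.mp this
      constructor
      · nlinarith [hh.le, (Nat.cast_nonneg i.val : (0:ℝ) ≤ i.val)]
      · nlinarith [hh.le]
    exact ⟨⟨(h1 a.1).1, (h1 a.1).2⟩, ⟨(h1 a.2).1, (h1 a.2).2⟩⟩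
  -- boundary predicate
  set bd : Fin (M + 1) × Fin (M + 1) → Prop :=
    fun a => a.1.val < B ∨ M < a.1.val + B ∨ a.2.val < B ∨ M < a.2.val + B with hbddef
  set Sbd : Finset (Fin (M + 1) × Fin (M + 1)) := S.filter bd with hSbddef
  set Sin : Finset (Fin (M + 1) × Fin (M + 1)) := S.filter (fun a => ¬ bd a) with hSindef
  -- for interior near-zero points, find a point on the curve nearby
  have key : ∀ a : Fin (M + 1) × Fin (M + 1), ∃ t : ℝ, a ∈ Sin →
      t ∈ Icc (0:ℝ) 1 ∧ dist (γ t) (pt a) ≤ 2 * (K * h) / κ := by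
    intro a
    by_cases ha : a ∈ Sin
    swap
    · exact ⟨0, fun hmem => absurd hmem ha⟩
    rw [hSindef, Finset.mem_filter, hSdef, Finset.mem_filter] at ha
    obtain ⟨⟨-, haφ⟩, habd⟩ := ha
    simp only [hbddef, not_or, not_lt] at habd
    obtain ⟨hj1, hj2, hk1, hk2⟩ := habd
    -- interior inclusion
    have hsqcpt : IsCompact sq := isCompact_Icc.prod isCompact_Icc
    have hint : Metric.closedBall (pt a) (2 * |φ (pt a)| / κ) ⊆ interior sq := by
      have hρ : 2 * |φ (pt a)| / κ < (B : ℝ) * h := by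
        have h1 : 2 * |φ (pt a)| / κ < 2 * (K * h) / κ := by gcongr
        have h2 : 2 * (K * h) / κ = (2 * K / κ) * h := by ring
        have h3 : (2 * K / κ) * h ≤ (B : ℝ) * h :=
          mul_le_mul_of_nonneg_right hB2K hh.le
        linarith
      intro z hz
      rw [Metric.mem_closedBall] at hz
      have hz1 : |z.1 - (pt a).1| ≤ 2 * |φ (pt a)| / κ := by
        calc |z.1 - (pt a).1| = dist z.1 (pt a).1 := (Real.dist_eq _ _).symm
          _ ≤ dist z (pt a) := by rw [Prod.dist_eq]; exact le_max_left _ _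
          _ ≤ _ := hz
      have hz2 : |z.2 - (pt a).2| ≤ 2 * |φ (pt a)| / κ := by
        calc |z.2 - (pt a).2| = dist z.2 (pt a).2 := (Real.dist_eq _ _).symm
          _ ≤ dist z (pt a) := by rw [Prod.dist_eq]; exact le_max_right _ _
          _ ≤ _ := hz
      have hint_eq : interior sq = Ioo y₀ ymax ×ˢ Ioo y₀ ymax := by
        rw [hsqdef, interior_prod_eq, interior_Icc]
      rw [hint_eq]
      rw [abs_le] at hz1 hz2
      have hBj : (B : ℝ) ≤ (a.1.val : ℝ) := Nat.cast_le.mpr hj1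
      have hBj2 : (a.1.val : ℝ) + B ≤ M := by exact_mod_cast hj2
      have hBk : (B : ℝ) ≤ (a.2.val : ℝ) := Nat.cast_le.mpr hk1
      have hBk2 : (a.2.val : ℝ) + B ≤ M := by exact_mod_cast hk2
      have hm1 : (B : ℝ) * h ≤ (a.1.val : ℝ) * h := mul_le_mul_of_nonneg_right hBj hh.le
      have hm2 : ((a.1.val : ℝ) + B) * h ≤ (M : ℝ) * h :=
        mul_le_mul_of_nonneg_right hBj2 hh.le
      have hm3 : (B : ℝ) * h ≤ (a.2.val : ℝ) * h := mul_le_mul_of_nonneg_right hBk hh.le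
      have hm4 : ((a.2.val : ℝ) + B) * h ≤ (M : ℝ) * h :=
        mul_le_mul_of_nonneg_right hBk2 hh.le
      have hpt1 : (pt a).1 = y₀ + (a.1.val : ℝ) * h := rfl
      have hpt2 : (pt a).2 = y₀ + (a.2.val : ℝ) * h := rfl
      rw [hpt1] at hz1
      rw [hpt2] at hz2
      constructor
      · constructor
        · nlinarith
        · nlinarith
      · constructor
        · nlinarith
        · nlinarith
    obtain ⟨q, hqsq, hq0, hqd⟩ :=
      exists_zero_near hsqcpt hLip.continuousOn hκ hdiff hgrad (hptmem a) hint
    have hqzero : q ∈ γ '' Icc (0:ℝ) 1 := by rw [← hcurve]; exact ⟨hqsq, hq0⟩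
    obtain ⟨t, ht01, hγt⟩ := hqzero
    refine ⟨t, fun _ => ⟨ht01, ?_⟩⟩
    rw [hγt]
    calc dist q (pt a) ≤ 2 * |φ (pt a)| / κ := hqd
      _ ≤ 2 * (K * h) / κ := by gcongr
  choose T hT using key
  -- index map along the curve
  set ind : Fin (M + 1) × Fin (M + 1) → Fin (M + 1) :=
    fun a => ⟨min ⌊T a * M⌋₊ M, Nat.lt_succ_of_le (min_le_right _ _)⟩ with hinddef
  -- fiber bound
  have hfiber : ∀ i ∈ Sin.image ind,
      (Sin.filter (fun a => ind a = i)).card ≤ (2 * d + 1) ^ 2 := by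
    intro i hi
    obtain ⟨a₀, ha₀, hia₀⟩ := Finset.mem_image.mp hi
    -- every element of the fiber is close to a₀ on the grid
    have hclose : ∀ a ∈ Sin.filter (fun a => ind a = i),
        a.1.val ≤ a₀.1.val + d ∧ a₀.1.val ≤ a.1.val + d ∧
        a.2.val ≤ a₀.2.val + d ∧ a₀.2.val ≤ a.2.val + d := by
      intro a ha
      rw [Finset.mem_filter] at ha
      obtain ⟨haSin, hai⟩ := ha
      obtain ⟨hT01, hTd⟩ := hT a haSin
      obtain ⟨hT01', hTd'⟩ := hT a₀ ha₀
      -- floors agree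
      have hfle : ∀ b : Fin (M+1) × Fin (M+1), b ∈ Sin → ⌊T b * M⌋₊ ≤ M := by
        intro b hb
        obtain ⟨hb01, -⟩ := hT b hb
        have : T b * M ≤ (M : ℝ) := by nlinarith [hb01.1, hb01.2]
        calc ⌊T b * M⌋₊ ≤ ⌊(M : ℝ)⌋₊ := Nat.floor_mono this
          _ = M := Nat.floor_natCast M
      have hfeq : ⌊T a * M⌋₊ = ⌊T a₀ * M⌋₊ := by
        have h1 : ind a = ind a₀ := by rw [hai, hia₀]
        have h2 : min ⌊T a * M⌋₊ M = min ⌊T a₀ * M⌋₊ M := congrArg Fin.val h1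
        rwa [min_eq_left (hfle a haSin), min_eq_left (hfle a₀ ha₀)] at h2
      -- hence parameters are close
      have htt : |T a - T a₀| ≤ 1 / M := by
        have hfl1 : (⌊T a * M⌋₊ : ℝ) ≤ T a * M :=
          Nat.floor_le (by nlinarith [hT01.1, hMpos.le])
        have hfl2 : T a * M < ⌊T a * M⌋₊ + 1 := Nat.lt_floor_add_one _
        have hfl3 : (⌊T a₀ * M⌋₊ : ℝ) ≤ T a₀ * M :=
          Nat.floor_le (by nlinarith [hT01'.1, hMpos.le])
        have hfl4 : T a₀ * M < ⌊T a₀ * M⌋₊ + 1 := Nat.lt_floor_add_one _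
        have hcast : (⌊T a * M⌋₊ : ℝ) = (⌊T a₀ * M⌋₊ : ℝ) := by exact_mod_cast hfeq
        have h1M : (1:ℝ) / M * M = 1 := by field_simp
        rw [abs_le]
        constructor
        · nlinarith
        · nlinarith
      have hγd : dist (γ (T a)) (γ (T a₀)) ≤ Λ * h / (ymax - y₀) := by
        have := hγlip (T a) hT01 (T a₀) hT01'
        rw [dist_eq_norm]
        have hM1 : Λ * |T a - T a₀| ≤ Λ * (1 / M) :=
          mul_le_mul_of_nonneg_left htt hΛ0
        have hMh' : (1 : ℝ) / M = h / (ymax - y₀) := by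
          rw [hhdef]; field_simp
        calc ‖γ (T a) - γ (T a₀)‖ ≤ Λ * ‖T a - T a₀‖ := this
          _ = Λ * |T a - T a₀| := by rw [Real.norm_eq_abs]
          _ ≤ Λ * (1 / M) := hM1
          _ = Λ * h / (ymax - y₀) := by rw [hMh']; ring
      have hptd : dist (pt a) (pt a₀) ≤ c * h := by
        calc dist (pt a) (pt a₀)
            ≤ dist (pt a) (γ (T a)) + dist (γ (T a)) (γ (T a₀)) + dist (γ (T a₀)) (pt a₀) :=
              dist_triangle4 _ _ _ _
          _ ≤ 2 * (K * h) / κ + Λ * h / (ymax - y₀) + 2 * (K * h) / κ := by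
              have h1 := hTd
              have h2 := hTd'
              rw [dist_comm] at h1
              gcongr
          _ = c * h := by rw [hcdef]; field_simp; ring
      -- coordinatewise
      have hco : ∀ (x y : ℕ), (x : ℝ) * h - (y : ℝ) * h = ((x:ℝ) - y) * h := by
        intro x y; ring
      have hd1 : |(a.1.val : ℝ) - a₀.1.val| ≤ d := by
        have hx : |(pt a).1 - (pt a₀).1| ≤ c * h := by
          calc |(pt a).1 - (pt a₀).1| = dist (pt a).1 (pt a₀).1 := (Real.dist_eq _ _).symm
            _ ≤ dist (pt a) (pt a₀) := by rw [Prod.dist_eq]; exact le_max_left _ _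
            _ ≤ c * h := hptd
        have hxx : (pt a).1 - (pt a₀).1 = ((a.1.val : ℝ) - a₀.1.val) * h := by
          show (y₀ + (a.1.val : ℝ) * h) - (y₀ + (a₀.1.val : ℝ) * h) = _
          ring
        rw [hxx, abs_mul, abs_of_pos hh] at hx
        have : |(a.1.val : ℝ) - a₀.1.val| ≤ c := by
          by_contra hcon
          push_neg at hcon
          nlinarith
        exact this.trans (Nat.le_ceil c)
      have hd2 : |(a.2.val : ℝ) - a₀.2.val| ≤ d := by
        have hx : |(pt a).2 - (pt a₀).2| ≤ c * h := by
          calc |(pt a).2 - (pt a₀).2| = dist (pt a).2 (pt a₀).2 := (Real.dist_eq _ _).symm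
            _ ≤ dist (pt a) (pt a₀) := by rw [Prod.dist_eq]; exact le_max_right _ _
            _ ≤ c * h := hptd
        have hxx : (pt a).2 - (pt a₀).2 = ((a.2.val : ℝ) - a₀.2.val) * h := by
          show (y₀ + (a.2.val : ℝ) * h) - (y₀ + (a₀.2.val : ℝ) * h) = _
          ring
        rw [hxx, abs_mul, abs_of_pos hh] at hx
        have : |(a.2.val : ℝ) - a₀.2.val| ≤ c := by
          by_contra hcon
          push_neg at hcon
          nlinarith
        exact this.trans (Nat.le_ceil c)
      rw [abs_le] at hd1 hd2
      have hn1 : a.1.val ≤ a₀.1.val + d := by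
        have hr : (a.1.val : ℝ) ≤ (a₀.1.val : ℝ) + d := by linarith [hd1.2]
        exact_mod_cast hr
      have hn2 : a₀.1.val ≤ a.1.val + d := by
        have hr : (a₀.1.val : ℝ) ≤ (a.1.val : ℝ) + d := by linarith [hd1.1]
        exact_mod_cast hr
      have hn3 : a.2.val ≤ a₀.2.val + d := by
        have hr : (a.2.val : ℝ) ≤ (a₀.2.val : ℝ) + d := by linarith [hd2.2]
        exact_mod_cast hr
      have hn4 : a₀.2.val ≤ a.2.val + d := by
        have hr : (a₀.2.val : ℝ) ≤ (a.2.val : ℝ) + d := by linarith [hd2.1]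
        exact_mod_cast hr
      exact ⟨hn1, hn2, hn3, hn4⟩
    calc (Sin.filter (fun a => ind a = i)).card
        ≤ ((Finset.Icc (a₀.1.val - d) (a₀.1.val + d)) ×ˢ
           (Finset.Icc (a₀.2.val - d) (a₀.2.val + d))).card := by
          apply Finset.card_le_card_of_injOn (fun a => (a.1.val, a.2.val))
          · intro a ha
            obtain ⟨h1, h2, h3, h4⟩ := hclose a ha
            rw [Finset.mem_coe, Finset.mem_product, Finset.mem_Icc, Finset.mem_Icc]
            dsimp only
            constructor
            · exact ⟨by omega, by omega⟩
            · exact ⟨by omega, by omega⟩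
          · intro x _ y _ hxy
            simp only [Prod.mk.injEq] at hxy
            exact Prod.ext (Fin.val_injective hxy.1) (Fin.val_injective hxy.2)
      _ ≤ (2 * d + 1) ^ 2 := by
          rw [Finset.card_product, Nat.card_Icc, Nat.card_Icc, pow_two]
          have h1 : a₀.1.val + d + 1 - (a₀.1.val - d) ≤ 2 * d + 1 := by omega
          have h2 : a₀.2.val + d + 1 - (a₀.2.val - d) ≤ 2 * d + 1 := by omega
          exact Nat.mul_le_mul h1 h2
  -- count interior points
  have hSin : Sin.card ≤ (M + 1) * (2 * d + 1) ^ 2 := by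
    rw [Finset.card_eq_sum_card_image ind Sin]
    calc ∑ i ∈ Sin.image ind, (Sin.filter (fun a => ind a = i)).card
        ≤ (Sin.image ind).card * (2 * d + 1) ^ 2 := by
          simpa using Finset.sum_le_card_nsmul (Sin.image ind) _ ((2 * d + 1) ^ 2) hfiber
      _ ≤ (M + 1) * (2 * d + 1) ^ 2 := by
          apply Nat.mul_le_mul_right
          calc (Sin.image ind).card ≤ Finset.univ.card := Finset.card_le_univ _
            _ = M + 1 := by rw [Finset.card_univ, Fintype.card_fin]
  -- count boundary points
  set badJ : Finset (Fin (M + 1)) :=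
    Finset.univ.filter (fun j => j.val < B ∨ M < j.val + B) with hbadJdef
  have hbadJ : badJ.card ≤ 2 * B := by
    rw [hbadJdef, Finset.filter_or]
    apply le_trans (Finset.card_union_le _ _)
    have h1 : (Finset.univ.filter (fun j : Fin (M + 1) => j.val < B)).card ≤ B := by
      have hmap : ∀ a ∈ Finset.univ.filter (fun j : Fin (M + 1) => j.val < B),
          a.val ∈ Finset.range B := by
        intro a ha
        rw [Finset.mem_filter] at ha
        exact Finset.mem_range.mpr ha.2
      have := Finset.card_le_card_of_injOn (fun j : Fin (M + 1) => j.val) hmap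
        (fun x _ y _ hxy => Fin.val_injective hxy)
      simpa [Finset.card_range] using this
    have h2 : (Finset.univ.filter (fun j : Fin (M + 1) => M < j.val + B)).card ≤ B := by
      have hmap : ∀ a ∈ Finset.univ.filter (fun j : Fin (M + 1) => M < j.val + B),
          M - a.val ∈ Finset.range B := by
        intro a ha
        rw [Finset.mem_filter] at ha
        have := a.isLt
        exact Finset.mem_range.mpr (by omega)
      have := Finset.card_le_card_of_injOn (fun j : Fin (M + 1) => M - j.val) hmap
        (fun x hx y hy hxy => by
          simp only [Finset.coe_filter, Set.mem_setOf_eq] at hx hy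
          have hx' := x.isLt
          have hy' := y.isLt
          have hxy' : M - x.val = M - y.val := hxy
          apply Fin.val_injective
          omega)
      simpa [Finset.card_range] using this
    omega
  have hSbd : Sbd.card ≤ 4 * B * (M + 1) := by
    have hsub : Sbd ⊆ badJ ×ˢ Finset.univ ∪ Finset.univ ×ˢ badJ := by
      intro a ha
      rw [hSbddef, Finset.mem_filter] at ha
      obtain ⟨-, hbd⟩ := ha
      have hbd' : a.1.val < B ∨ M < a.1.val + B ∨ a.2.val < B ∨ M < a.2.val + B := hbd
      have hmem : a.1 ∈ badJ ∨ a.2 ∈ badJ := by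
        rw [hbadJdef]
        simp only [Finset.mem_filter, Finset.mem_univ, true_and]
        rcases hbd' with h | h | h | h
        · exact Or.inl (Or.inl h)
        · exact Or.inl (Or.inr h)
        · exact Or.inr (Or.inl h)
        · exact Or.inr (Or.inr h)
      rcases hmem with h | h
      · exact Finset.mem_union_left _ (Finset.mem_product.mpr ⟨h, Finset.mem_univ _⟩)
      · exact Finset.mem_union_right _ (Finset.mem_product.mpr ⟨Finset.mem_univ _, h⟩)
    calc Sbd.card ≤ (badJ ×ˢ Finset.univ ∪ Finset.univ ×ˢ badJ).card :=
          Finset.card_le_card hsub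
      _ ≤ (badJ ×ˢ (Finset.univ : Finset (Fin (M + 1)))).card +
          ((Finset.univ : Finset (Fin (M + 1))) ×ˢ badJ).card := Finset.card_union_le _ _
      _ ≤ 4 * B * (M + 1) := by
          rw [Finset.card_product, Finset.card_product, Finset.card_univ, Fintype.card_fin]
          nlinarith [hbadJ]
  have hsplit : Sbd.card + Sin.card = S.card :=
    Finset.card_filter_add_card_filter_not (p := bd)
  have htot : S.card ≤ Cc * (M + 1) := by
    rw [← hsplit, hCcdef]
    calc Sbd.card + Sin.card ≤ 4 * B * (M + 1) + (M + 1) * (2 * d + 1) ^ 2 :=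
          Nat.add_le_add hSbd hSin
      _ = (4 * B + (2 * d + 1) ^ 2) * (M + 1) := by ring
  have hdiv : 2 * ((Cc : ℝ) + 1) * (ymax - y₀) / h = 2 * ((Cc : ℝ) + 1) * M := by
    rw [hhdef]
    field_simp
  rw [hdiv]
  have hnat : Cc * (M + 1) ≤ 2 * (Cc + 1) * M := by nlinarith [hM]
  calc (S.card : ℝ) ≤ ((Cc * (M + 1) : ℕ) : ℝ) := Nat.cast_le.mpr htot
    _ ≤ ((2 * (Cc + 1) * M : ℕ) : ℝ) := Nat.cast_le.mpr hnat
    _ = 2 * ((Cc : ℝ) + 1) * M := by push_cast; ring
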